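/- Let a be a real number with a > 1 and define h̄ : ℝ → ℂ by h̄(x) = ∫₀^∞ exp(−y^a · e^{iax}) dy. Then for every x with |x| < π/(2a), h̄ is differentiable at x with derivative h̄'(x) = −i · h̄(x). -/

import Mathlib

open MeasureTheory

/-- The function `h̄(x) = ∫₀^∞ exp(-yᵃ e^{iax}) dy`, where `yᵃ` is the real
power and the exponential is complex. -/
noncomputable def hbar (a : ℝ) (x : ℝ) : ℂ :=
  ∫ y in Set.Ioi (0 : ℝ), Complex.exp (-(y ^ a : ℝ) * Complex.exp (Complex.I * a * x))

open Set Complex Filter in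
/-- **The differential equation `h̄'(x) = -i h̄(x)`.**
For real `a > 1` and every `x` with `|x| < π/(2a)`, the function
`h̄(x) = ∫₀^∞ exp(-yᵃ e^{iax}) dy` is differentiable at `x` with derivative
`-i * h̄(x)`. -/
theorem hbar_hasDerivAt (a : ℝ) (ha : 1 < a) (x : ℝ) (hx : |x| < Real.pi / (2 * a)) :
    HasDerivAt (hbar a) (-Complex.I * hbar a x) x := by
  have ha0 : (0:ℝ) < a := by linarith
  -- norm of the integrand
  have hnorm : ∀ t y : ℝ, ‖Complex.exp (-(y ^ a : ℝ) * Complex.exp (Complex.I * a * t))‖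
      = Real.exp (-Real.cos (a * t) * y ^ a) := by
    intro t y
    rw [Complex.norm_exp]
    congr 1
    simp [Complex.exp_re, Complex.mul_re, Complex.mul_im]
    ring
  -- choice of ε and lower bound c on cos
  set ε : ℝ := (Real.pi / (2 * a) - |x|) / 2 with hεdef
  have hε : 0 < ε := by simp only [hεdef]; linarith
  have hxe : a * (|x| + ε) < Real.pi / 2 := by
    have : |x| + ε < Real.pi / (2 * a) := by simp only [hεdef]; linarith
    calc a * (|x| + ε) < a * (Real.pi / (2 * a)) := mul_lt_mul_of_pos_left this ha0
      _ = Real.pi / 2 := by field_simp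
  set c : ℝ := Real.cos (a * (|x| + ε)) with hcdef
  have hxnonneg : 0 ≤ a * (|x| + ε) := by positivity
  have hc : 0 < c := by
    apply Real.cos_pos_of_mem_Ioo
    exact ⟨by linarith [Real.pi_pos], hxe⟩
  have hcos : ∀ t ∈ Metric.ball x ε, c ≤ Real.cos (a * t) := by
    intro t ht
    have h1 : |t| ≤ |x| + ε := by
      have h := Metric.mem_ball.mp ht
      have h' := abs_sub_abs_le_abs_sub t x
      rw [Real.dist_eq] at h
      linarith
    have h2 : |a * t| ≤ a * (|x| + ε) := by
      rw [abs_mul, _root_.abs_of_pos ha0]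
      exact mul_le_mul_of_nonneg_left h1 ha0.le
    calc c ≤ Real.cos |a * t| := by
          apply Real.cos_le_cos_of_nonneg_of_le_pi (abs_nonneg _) _ h2
          linarith [Real.pi_pos]
      _ = Real.cos (a * t) := Real.cos_abs _
  have hcx : 0 < Real.cos (a * x) := lt_of_lt_of_le hc (hcos x (Metric.mem_ball_self hε))
  -- continuity facts
  have hrpow : Continuous (fun y : ℝ => y ^ a) :=
    continuous_iff_continuousAt.mpr fun y => Real.continuousAt_rpow_const y a (Or.inr ha0.le)
  have hcontF : ∀ t : ℝ, Continuous
      (fun y : ℝ => Complex.exp (-(y ^ a : ℝ) * Complex.exp (Complex.I * a * t))) := by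
    intro t
    exact (((Complex.continuous_ofReal.comp hrpow).neg.mul continuous_const)).cexp
  -- integrability of exp(-b y^a) and y^a exp(-b y^a)
  have hint0 : ∀ b : ℝ, 0 < b → IntegrableOn (fun y : ℝ => Real.exp (-b * y ^ a)) (Ioi 0) := by
    intro b hb
    simpa using integrableOn_rpow_mul_exp_neg_mul_rpow (p := a) (s := 0) (by norm_num) ha0 hb
  have hint1 : ∀ b : ℝ, 0 < b →
      IntegrableOn (fun y : ℝ => y ^ a * Real.exp (-b * y ^ a)) (Ioi 0) :=
    fun b hb => integrableOn_rpow_mul_exp_neg_mul_rpow (p := a) (s := a) (by linarith) ha0 hb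
  -- integrability of the integrand for cos(at) > 0
  have hFint : ∀ t : ℝ, 0 < Real.cos (a * t) → IntegrableOn
      (fun y : ℝ => Complex.exp (-(y ^ a : ℝ) * Complex.exp (Complex.I * a * t))) (Ioi 0) := by
    intro t hct
    apply Integrable.mono' (hint0 _ hct) ((hcontF t).aestronglyMeasurable)
    filter_upwards with y
    rw [hnorm]
  -- the function K and second integrand
  set K : ℂ := Complex.exp (Complex.I * a * x) with hKdef
  have hnormK : ∀ y : ℝ, ‖Complex.exp (-(y ^ a : ℝ) * K)‖
      = Real.exp (-Real.cos (a * x) * y ^ a) := fun y => hnorm x y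
  have hKint : IntegrableOn
      (fun y : ℝ => ((y ^ a : ℝ) : ℂ) * Complex.exp (-(y ^ a : ℝ) * K)) (Ioi 0) := by
    apply Integrable.mono' (hint1 _ hcx)
    · exact ((Complex.continuous_ofReal.comp hrpow).mul
        (((Complex.continuous_ofReal.comp hrpow).neg.mul continuous_const)).cexp).aestronglyMeasurable
    · rw [ae_restrict_iff' measurableSet_Ioi]
      filter_upwards with y hy
      rw [mem_Ioi] at hy
      rw [norm_mul, hnormK, Complex.norm_real, Real.norm_eq_abs,
        _root_.abs_of_nonneg (Real.rpow_nonneg hy.le a)]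
  -- the derivative integrand
  set F' : ℝ → ℝ → ℂ := fun t y =>
    Complex.exp (-(y ^ a : ℝ) * Complex.exp (Complex.I * a * t)) *
      (-(y ^ a : ℝ) * (Complex.exp (Complex.I * a * t) * (Complex.I * a))) with hF'def
  -- apply differentiation under the integral sign
  have key := hasDerivAt_integral_of_dominated_loc_of_deriv_le (𝕜 := ℝ)
      (μ := volume.restrict (Ioi 0))
      (F := fun t y => Complex.exp (-(y ^ a : ℝ) * Complex.exp (Complex.I * a * t)))
      (F' := F') (x₀ := x)
      (bound := fun y => a * (y ^ a * Real.exp (-c * y ^ a))) (Metric.ball_mem_nhds x hε)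
      ?_ (hFint x hcx) ?_ ?_ ?_ ?_
  · obtain ⟨-, hder⟩ := key
    have heq : (∫ y in Ioi (0:ℝ), F' x y) = -Complex.I * hbar a x := by
      -- integration by parts
      set g : ℝ → ℂ := fun y => (y : ℂ) * Complex.exp (-(y ^ a : ℝ) * K) with hgdef
      set G' : ℝ → ℂ := fun y =>
        Complex.exp (-(y ^ a : ℝ) * K) - (a : ℂ) * K * (y ^ a : ℝ) * Complex.exp (-(y ^ a : ℝ) * K)
        with hG'def
      have hgderiv : ∀ y ∈ Ioi (0:ℝ), HasDerivAt g (G' y) y := by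
        intro y hy
        rw [mem_Ioi] at hy
        have hy1 : HasDerivAt (fun y : ℝ => (y : ℂ)) 1 y := by
          simpa using (hasDerivAt_id y).ofReal_comp
        have hy2 : HasDerivAt (fun y : ℝ => y ^ a) (a * y ^ (a - 1)) y :=
          Real.hasDerivAt_rpow_const (Or.inl hy.ne')
        have hy3 : HasDerivAt (fun y : ℝ => ((y ^ a : ℝ) : ℂ)) ((a * y ^ (a - 1) : ℝ) : ℂ) y :=
          hy2.ofReal_comp
        have hy5 := ((hy3.neg.mul_const K)).cexp
        have hg := hy1.mul hy5
        refine hg.congr_deriv ?_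
        have hpow : y ^ (a - 1) * y = y ^ a := by
          rw [← Real.rpow_add_one hy.ne' (a - 1)]
          ring_nf
        simp only [hG'def, Pi.neg_apply]
        push_cast
        rw [← hpow]
        push_cast
        ring
      have hgcont : Continuous g :=
        Complex.continuous_ofReal.mul (((Complex.continuous_ofReal.comp hrpow).neg.mul
          continuous_const)).cexp
      have hG'int : IntegrableOn G' (Ioi 0) := by
        apply Integrable.sub (hFint x hcx)
        have h2 := hKint.const_mul ((a : ℂ) * K)
        apply h2.congr
        filter_upwards with y
        ring
      have htend : Tendsto g atTop (nhds 0) := by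
        rw [tendsto_zero_iff_norm_tendsto_zero]
        have hlo := rpow_mul_exp_neg_mul_rpow_isLittleO_exp_neg 1 ha hcx
        have h2 : Tendsto (fun y : ℝ => Real.exp (-(1/2) * y)) atTop (nhds 0) := by
          have hb : Tendsto (fun y : ℝ => -((1/2 : ℝ) * y)) atTop atBot :=
            tendsto_neg_atTop_atBot.comp
              (Filter.Tendsto.const_mul_atTop (by norm_num : (0:ℝ) < 1/2) tendsto_id)
          exact (Real.tendsto_exp_atBot.comp hb).congr fun y => by
            simp [Function.comp, neg_mul]
        have h3 := hlo.isBigO.trans_tendsto h2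
        apply Tendsto.congr' _ h3
        filter_upwards [eventually_ge_atTop (0:ℝ)] with y hy
        rw [norm_mul, hnormK, Complex.norm_real, Real.norm_eq_abs, _root_.abs_of_nonneg hy,
          Real.rpow_one, neg_mul]
      have hIBP : (∫ y in Ioi (0:ℝ), G' y) = 0 := by
        rw [integral_Ioi_of_hasDerivAt_of_tendsto hgcont.continuousWithinAt hgderiv hG'int htend]
        simp [hgdef]
      have hbarK : hbar a x = ∫ y in Ioi (0:ℝ), Complex.exp (-(y ^ a : ℝ) * K) := by
        rw [hKdef, hbar]
      set J : ℂ := ∫ y in Ioi (0:ℝ), ((y ^ a : ℝ) : ℂ) * Complex.exp (-(y ^ a : ℝ) * K)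
        with hJdef
      have hsplit : (∫ y in Ioi (0:ℝ), G' y) = hbar a x - (a : ℂ) * K * J := by
        simp only [hG'def]
        rw [integral_sub (hFint x hcx)]
        · rw [hbarK, hJdef, ← integral_const_mul]
          congr 1
          apply integral_congr_ae
          filter_upwards with y
          ring
        · have h2 := hKint.const_mul ((a : ℂ) * K)
          apply h2.congr
          filter_upwards with y
          ring
      have hJeq : hbar a x = (a : ℂ) * K * J := by
        have := hsplit.symm.trans hIBP
        linear_combination this
      calc (∫ y in Ioi (0:ℝ), F' x y)
          = ∫ y in Ioi (0:ℝ), (-(K * (Complex.I * a))) *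
              (((y ^ a : ℝ) : ℂ) * Complex.exp (-(y ^ a : ℝ) * K)) := by
            congr 1
            funext y
            simp only [hF'def, ← hKdef]
            ring
        _ = (-(K * (Complex.I * a))) * J := by rw [hJdef, integral_const_mul]
        _ = -Complex.I * ((a : ℂ) * K * J) := by ring
        _ = -Complex.I * hbar a x := by rw [hJeq]
    rw [← heq]
    exact hder
  · -- measurability near x
    filter_upwards with t using (hcontF t).aestronglyMeasurable
  · -- measurability of F' x
    apply Continuous.aestronglyMeasurable
    exact (hcontF x).mul (((Complex.continuous_ofReal.comp hrpow).neg).mul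
      (continuous_const.mul continuous_const))
  · -- bound
    rw [ae_restrict_iff' measurableSet_Ioi]
    filter_upwards with y hy
    intro t ht
    rw [mem_Ioi] at hy
    have habs : ‖Complex.exp (Complex.I * a * t)‖ = 1 := by
      rw [Complex.norm_exp]
      simp [Complex.mul_re, Complex.mul_im]
    simp only [hF'def]
    rw [norm_mul, hnorm, norm_mul, norm_mul, habs, norm_neg, Complex.norm_real,
      Real.norm_eq_abs, _root_.abs_of_nonneg (Real.rpow_nonneg hy.le a), norm_mul,
      Complex.norm_I, Complex.norm_real, Real.norm_eq_abs, _root_.abs_of_pos ha0]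
    have h1 : Real.exp (-Real.cos (a * t) * y ^ a) ≤ Real.exp (-c * y ^ a) := by
      apply Real.exp_le_exp.mpr
      have := hcos t ht
      nlinarith [Real.rpow_nonneg hy.le a]
    calc Real.exp (-Real.cos (a * t) * y ^ a) * (y ^ a * (1 * (1 * a)))
        ≤ Real.exp (-c * y ^ a) * (y ^ a * (1 * (1 * a))) := by
          apply mul_le_mul_of_nonneg_right h1; positivity
      _ = a * (y ^ a * Real.exp (-c * y ^ a)) := by ring
  · -- bound integrable
    exact (hint1 c hc).const_mul a
  · -- differentiability
    filter_upwards with y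
    intro t ht
    have h1 : HasDerivAt (fun t : ℝ => (Complex.I * a * t : ℂ)) (Complex.I * a) t := by
      simpa using (Complex.ofRealCLM.hasDerivAt (x := t)).const_mul (Complex.I * (a:ℂ))
    have h2 := h1.cexp
    have h3 := (h2.const_mul (-(((y:ℝ) ^ a : ℝ) : ℂ))).cexp
    exact h3
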